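/- Every totally nonnegative unitriangular (k+1)×(k+1) Toeplitz matrix is a limit of totally positive unitriangular Toeplitz matrices: the closure of T_{>0} in T_{≥0} is all of T_{≥0}. -/
import Mathlib


/-- The entries of a lower unitriangular Toeplitz matrix with subdiagonal
values `h_1,…,h_k`: `h_0 = 1`, and `h_n = 0` for `n < 0` or `n > k`. -/
def toepEntry (k : ℕ) (h : Fin k → ℝ) (n : ℤ) : ℝ :=
  if hn : 0 < n ∧ n ≤ (k : ℤ) then h ⟨(n - 1).toNat, by omega⟩
  else if n = 0 then 1 else 0

/-- The `(k+1) × (k+1)` lower unitriangular Toeplitz matrix with subdiagonal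
entries `h_1,…,h_k`. -/
def toep (k : ℕ) (h : Fin k → ℝ) : Matrix (Fin (k + 1)) (Fin (k + 1)) ℝ :=
  Matrix.of fun i j => toepEntry k h ((i : ℤ) - (j : ℤ))

/-- `T_{≥0}`: all minors of the Toeplitz matrix are nonnegative. -/
def TNN (k : ℕ) : Set (Fin k → ℝ) :=
  {h | ∀ (n : ℕ) (f g : Fin n → Fin (k + 1)), StrictMono f → StrictMono g →
    0 ≤ (((toep k h).submatrix f g).det)}

/-- `T_{>0}` ⊆ `T_{≥0}`: the minors using no row and no column of the strictly
upper part (i.e. with `g i ≤ f i` for all `i`, so that the minor does not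
vanish identically on unitriangular lower-triangular matrices) are positive. -/
def TPos (k : ℕ) : Set (Fin k → ℝ) :=
  TNN k ∩
    {h | ∀ (n : ℕ) (f g : Fin n → Fin (k + 1)), StrictMono f → StrictMono g →
      (∀ i, g i ≤ f i) → 0 < (((toep k h).submatrix f g).det)}

set_option linter.unreachableTactic false
set_option linter.unusedTactic false
set_option linter.unnecessarySeqFocus false

namespace ToepAux

variable {k : ℕ}

lemma toepEntry_of_neg {h : Fin k → ℝ} {n : ℤ} (hn : n < 0) : toepEntry k h n = 0 := by
  unfold toepEntry; rw [dif_neg (by omega), if_neg (by omega)]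

lemma toepEntry_zero {h : Fin k → ℝ} : toepEntry k h 0 = 1 := by
  unfold toepEntry; rw [dif_neg (by omega), if_pos rfl]

lemma toepEntry_of_gt {h : Fin k → ℝ} {n : ℤ} (hn : (k : ℤ) < n) : toepEntry k h n = 0 := by
  unfold toepEntry; rw [dif_neg (by omega), if_neg (by omega)]

lemma toepEntry_of_pos {h : Fin k → ℝ} {n : ℤ} (h1 : 0 < n) (h2 : n ≤ (k : ℤ)) :
    toepEntry k h n = h ⟨(n - 1).toNat, by omega⟩ := by
  unfold toepEntry; rw [dif_pos ⟨h1, h2⟩]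

/-- the `h`-vector of `I + t E`. -/
def unitv (k : ℕ) (t : ℝ) : Fin k → ℝ := fun a => if a.val = 0 then t else 0

lemma toepEntry_unitv (t : ℝ) (d : ℤ) :
    toepEntry k (unitv k t) d
      = (if d = 0 then (1:ℝ) else 0) + (if d = 1 ∧ 1 ≤ (k : ℤ) then t else 0) := by
  unfold toepEntry unitv
  split_ifs <;> (try simp only [Fin.val_mk] at *) <;> (try (exfalso; omega)) <;> ring

end ToepAux

namespace ToepAux

variable {k : ℕ}

/-- Column `m` of `C`, extended by zero outside the index range. -/
def colZ (k : ℕ) (C : Matrix (Fin (k + 1)) (Fin (k + 1)) ℝ) (m : ℤ) : Fin (k + 1) → ℝ :=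
  if hm : 0 ≤ m ∧ m ≤ (k : ℤ) then fun i => C i ⟨m.toNat, by omega⟩ else 0

lemma colZ_coe (C : Matrix (Fin (k + 1)) (Fin (k + 1)) ℝ) (j : Fin (k + 1)) :
    colZ k C (j : ℤ) = fun i => C i j := by
  have hj := j.isLt
  unfold colZ
  rw [dif_pos ⟨by omega, by omega⟩]
  funext i
  exact congrArg _ (Fin.ext (by simp))

lemma mul_unit_apply (C : Matrix (Fin (k + 1)) (Fin (k + 1)) ℝ) (t : ℝ) (i j : Fin (k + 1)) :
    (C * toep k (unitv k t)) i j = C i j + t * colZ k C ((j : ℤ) + 1) i := by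
  rw [Matrix.mul_apply]
  have hsum : ∀ p : Fin (k + 1), C i p * toep k (unitv k t) p j
      = (if j = p then C i j else 0)
        + (if ((p : ℤ) - (j : ℤ) = 1 ∧ 1 ≤ (k : ℤ)) then t * C i p else 0) := by
    intro p
    show C i p * toepEntry k (unitv k t) ((p : ℤ) - (j : ℤ)) = _
    rw [toepEntry_unitv, mul_add]
    congr 1
    · by_cases hpj : j = p
      · subst hpj; rw [if_pos (by omega), if_pos rfl, mul_one]
      · rw [if_neg (fun hc => hpj (Fin.ext (by omega))), if_neg hpj, mul_zero]
    · split_ifs with hc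
      · ring
      · ring
  rw [Finset.sum_congr rfl (fun p _ => hsum p), Finset.sum_add_distrib]
  congr 1
  · rw [Finset.sum_ite_eq, if_pos (Finset.mem_univ _)]
  · by_cases hj : (j : ℕ) < k
    · have hcond : ∀ p : Fin (k + 1),
          (((p : ℤ) - (j : ℤ) = 1 ∧ 1 ≤ (k : ℤ))) ↔ (⟨(j : ℕ) + 1, by omega⟩ : Fin (k + 1)) = p := by
        intro p
        constructor
        · rintro ⟨h1, _⟩; exact Fin.ext (by simp <;> omega)
        · rintro rfl; exact ⟨by simp <;> omega, by omega⟩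
      rw [Finset.sum_congr rfl (fun p _ => if_congr (hcond p) rfl rfl),
        Finset.sum_ite_eq, if_pos (Finset.mem_univ _)]
      unfold colZ
      rw [dif_pos ⟨by omega, by omega⟩]
      congr 1 <;> try exact Fin.ext (by simp <;> omega)
    · have hj' : (j : ℕ) = k := by have := j.isLt; omega
      rw [Finset.sum_eq_zero, ]
      · unfold colZ
        rw [dif_neg (by omega), Pi.zero_apply, mul_zero]
      · intro p _
        rw [if_neg]
        rintro ⟨h1, _⟩
        have := p.isLt
        omega

end ToepAux

namespace ToepAux

variable {k : ℕ}

/-- Total nonnegativity of a matrix: all minors (with strictly increasing rows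
and columns) are nonnegative. -/
def MatTNN (k : ℕ) (A : Matrix (Fin (k + 1)) (Fin (k + 1)) ℝ) : Prop :=
  ∀ (n : ℕ) (f g : Fin n → Fin (k + 1)), StrictMono f → StrictMono g →
    0 ≤ (A.submatrix f g).det

lemma strictMono_of_adj {n : ℕ} {α : Type*} [Preorder α] {f : Fin n → α}
    (h : ∀ (j : ℕ) (hj : j + 1 < n), f ⟨j, Nat.lt_of_succ_lt hj⟩ < f ⟨j + 1, hj⟩) :
    StrictMono f := by
  cases n with
  | zero => intro a; exact a.elim0
  | succ m =>
    rw [Fin.strictMono_iff_lt_succ]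
    intro i
    have hi := i.isLt
    have := h i.val (by omega)
    exact this

/-- The matrix (transposed minor of `C`) with rows given by the generalized
columns `gz j` of `C` restricted to the rows `f`. -/
def WM (k : ℕ) (C : Matrix (Fin (k + 1)) (Fin (k + 1)) ℝ) {n : ℕ} (f : Fin n → Fin (k + 1))
    (gz : Fin n → ℤ) : Matrix (Fin n) (Fin n) ℝ :=
  Matrix.of fun j i => colZ k C (gz j) (f i)

lemma WM_eval (C : Matrix (Fin (k + 1)) (Fin (k + 1)) ℝ) {n : ℕ} (f : Fin n → Fin (k + 1))
    (gz : Fin n → ℤ) (h0 : ∀ j, 0 ≤ gz j) (hk : ∀ j, gz j ≤ (k : ℤ))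
    (hmono : StrictMono gz) :
    ∃ g' : Fin n → Fin (k + 1), StrictMono g' ∧ (∀ j, (g' j : ℤ) = gz j) ∧
      (WM k C f gz).det = (C.submatrix f g').det := by
  refine ⟨fun j => ⟨(gz j).toNat, by have := h0 j; have := hk j; omega⟩, ?_, ?_, ?_⟩
  · intro a b hab
    have := hmono hab
    have := h0 a
    simp only [Fin.mk_lt_mk]
    omega
  · intro j
    have := h0 j
    simp
    omega
  · rw [← Matrix.det_transpose (C.submatrix _ _)]
    congr 1
    ext j i
    simp only [Matrix.transpose_apply, Matrix.submatrix_apply, WM, Matrix.of_apply]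
    unfold colZ
    rw [dif_pos ⟨h0 j, hk j⟩]

lemma WM_det_nonneg (C : Matrix (Fin (k + 1)) (Fin (k + 1)) ℝ) (hC : MatTNN k C) {n : ℕ}
    (f g : Fin n → Fin (k + 1)) (hf : StrictMono f) (hg : StrictMono g)
    (s : Finset (Fin n)) :
    0 ≤ (WM k C f (fun j => (g j : ℤ) + if j ∈ s then 1 else 0)).det := by
  set gz : Fin n → ℤ := fun j => (g j : ℤ) + if j ∈ s then 1 else 0 with hgz
  have hgmono : ∀ a b : Fin n, a < b → (g a : ℤ) < (g b : ℤ) := by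
    intro a b hab; exact_mod_cast (show ((g a : ℕ) : ℤ) < ((g b : ℕ) : ℤ) from by
      exact_mod_cast hg hab)
  have h0 : ∀ j, 0 ≤ gz j := by
    intro j; simp only [hgz]; split_ifs <;> positivity
  have hweak : ∀ (j : ℕ) (hj : j + 1 < n), gz ⟨j, Nat.lt_of_succ_lt hj⟩ ≤ gz ⟨j + 1, hj⟩ := by
    intro j hj
    have := hgmono ⟨j, Nat.lt_of_succ_lt hj⟩ ⟨j + 1, hj⟩ (by simp)
    simp only [hgz]
    split_ifs <;> omega
  by_cases hbig : ∃ j, (k : ℤ) < gz j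
  · obtain ⟨j, hj⟩ := hbig
    rw [Matrix.det_eq_zero_of_row_eq_zero j]
    intro i
    simp only [WM, Matrix.of_apply]
    unfold colZ
    rw [dif_neg (by omega)]
    rfl
  by_cases heq : ∃ (j : ℕ) (hj : j + 1 < n), gz ⟨j, Nat.lt_of_succ_lt hj⟩ = gz ⟨j + 1, hj⟩
  · obtain ⟨j, hj, he⟩ := heq
    refine le_of_eq (Matrix.det_zero_of_row_eq
      (show (⟨j, Nat.lt_of_succ_lt hj⟩ : Fin n) ≠ ⟨j + 1, hj⟩ from by simp) ?_).symm
    funext i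
    simp only [WM, Matrix.of_apply, he]
  · push_neg at hbig heq
    have hmono : StrictMono gz := by
      apply strictMono_of_adj
      intro j hj
      exact lt_of_le_of_ne (hweak j hj) (heq j hj)
    obtain ⟨g', hg', _, hdet⟩ := WM_eval C f gz h0 (fun j => hbig j) hmono
    rw [hdet]
    exact hC n f g' hf hg'

end ToepAux

namespace ToepAux

variable {k : ℕ}

open Matrix in
lemma det_mul_unit (C : Matrix (Fin (k + 1)) (Fin (k + 1)) ℝ) (t : ℝ) {n : ℕ}
    (f g : Fin n → Fin (k + 1)) :
    ((C * toep k (unitv k t)).submatrix f g).det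
      = ∑ s : Finset (Fin n), t ^ s.card *
          (WM k C f (fun j => (g j : ℤ) + if j ∈ s then 1 else 0)).det := by
  classical
  set u : Fin n → Fin n → ℝ := fun j i => t * colZ k C ((g j : ℤ) + 1) (f i) with hu
  set v : Fin n → Fin n → ℝ := fun j i => colZ k C ((g j : ℤ)) (f i) with hv
  rw [← Matrix.det_transpose]
  have hT : ((C * toep k (unitv k t)).submatrix f g)ᵀ = Matrix.of (u + v) := by
    ext j i
    simp only [Matrix.transpose_apply, Matrix.submatrix_apply, Matrix.of_apply, Pi.add_apply,
      mul_unit_apply, hu, hv, colZ_coe]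
    ring
  rw [hT]
  have expand := MultilinearMap.map_add_univ
    ((Matrix.detRowAlternating : (Fin n → ℝ) [⋀^Fin n]→ₗ[ℝ] ℝ).toMultilinearMap) u v
  have hdet0 : (Matrix.of (u + v)).det
      = ∑ s : Finset (Fin n),
          (Matrix.detRowAlternating : (Fin n → ℝ) [⋀^Fin n]→ₗ[ℝ] ℝ) (s.piecewise u v) :=
    expand
  rw [hdet0]
  refine Finset.sum_congr rfl (fun s _ => ?_)
  have hpw : s.piecewise u v
      = fun j i => (if j ∈ s then t else 1)
          * (WM k C f (fun j' => (g j' : ℤ) + if j' ∈ s then 1 else 0)) j i := by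
    funext j i
    simp only [Finset.piecewise, hu, hv, WM, Matrix.of_apply]
    split_ifs with hj
    · ring_nf
    · ring_nf
  rw [hpw]
  have hdet1 : (Matrix.detRowAlternating : (Fin n → ℝ) [⋀^Fin n]→ₗ[ℝ] ℝ)
      (fun j i => (if j ∈ s then t else 1)
          * (WM k C f (fun j' => (g j' : ℤ) + if j' ∈ s then 1 else 0)) j i)
      = (Matrix.of fun j i => (if j ∈ s then t else 1)
          * (WM k C f (fun j' => (g j' : ℤ) + if j' ∈ s then 1 else 0)) j i).det := rfl
  rw [hdet1, Matrix.det_mul_column]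
  congr 1
  rw [Finset.prod_ite_mem, Finset.prod_const, Finset.univ_inter]

end ToepAux

namespace ToepAux

variable {k : ℕ}

lemma fin_cast_lt {m : ℕ} {a b : Fin m} (hab : a < b) : (a : ℤ) < (b : ℤ) := by
  have := (Fin.lt_def).1 hab; omega

lemma fin_cast_le {m : ℕ} {a b : Fin m} (hab : a ≤ b) : (a : ℤ) ≤ (b : ℤ) := by
  have := (Fin.le_def).1 hab; omega

lemma det_principal (h : Fin k → ℝ) {n : ℕ} (f : Fin n → Fin (k + 1)) (hf : StrictMono f) :
    ((toep k h).submatrix f f).det = 1 := by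
  have htri : ((toep k h).submatrix f f).BlockTriangular OrderDual.toDual := by
    intro i j hij
    have hij' : i < j := hij
    have : (f i : ℤ) < (f j : ℤ) := fin_cast_lt (hf hij')
    simp only [Matrix.submatrix_apply]
    show toepEntry k h ((f i : ℤ) - (f j : ℤ)) = 0
    exact toepEntry_of_neg (by omega)
  rw [Matrix.det_of_lowerTriangular _ htri]
  apply Finset.prod_eq_one
  intro i _
  show toepEntry k h ((f i : ℤ) - (f i : ℤ)) = 1
  rw [sub_self]
  exact toepEntry_zero

lemma MatTNN_mul_unit {C : Matrix (Fin (k + 1)) (Fin (k + 1)) ℝ} (hC : MatTNN k C) {t : ℝ}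
    (ht : 0 ≤ t) : MatTNN k (C * toep k (unitv k t)) := by
  intro n f g hf hg
  rw [det_mul_unit]
  refine Finset.sum_nonneg fun s _ => mul_nonneg (pow_nonneg ht _) ?_
  exact WM_det_nonneg C hC f g hf hg s

lemma MatTNN_mul_unit_pow {h : Fin k → ℝ} (hh : MatTNN k (toep k h)) {t : ℝ} (ht : 0 ≤ t) :
    ∀ m : ℕ, MatTNN k (toep k h * toep k (unitv k t) ^ m) := by
  intro m
  induction m with
  | zero => simpa using hh
  | succ m ih =>
    rw [pow_succ, ← mul_assoc]
    exact MatTNN_mul_unit ih ht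

lemma pos_mul_unit_pow {h : Fin k → ℝ} (hh : MatTNN k (toep k h)) {t : ℝ} (ht : 0 < t) :
    ∀ (m : ℕ) {n : ℕ} (f g : Fin n → Fin (k + 1)), StrictMono f → StrictMono g →
      (∀ i, g i ≤ f i) → (∀ i, (f i : ℕ) ≤ (g i : ℕ) + m) →
      0 < ((toep k h * toep k (unitv k t) ^ m).submatrix f g).det := by
  intro m
  induction m with
  | zero =>
    intro n f g hf hg hle hbd
    have hgf : g = f := by
      funext i
      have h1 := hle i
      have h2 := hbd i
      exact Fin.ext (by omega)
    rw [pow_zero, mul_one, hgf, det_principal h f hf]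
    exact one_pos
  | succ m ih =>
    intro n f g hf hg hle hbd
    rw [pow_succ, ← mul_assoc, det_mul_unit]
    set s0 : Finset (Fin n) := Finset.univ.filter (fun i => g i < f i) with hs0
    have hmem : ∀ j : Fin n, j ∈ s0 ↔ g j < f j := by
      intro j; simp [hs0]
    set gz : Fin n → ℤ := fun j => (g j : ℤ) + if j ∈ s0 then 1 else 0 with hgz
    have hfmono : ∀ a b : Fin n, a < b → (f a : ℤ) < (f b : ℤ) :=
      fun a b hab => fin_cast_lt (hf hab)
    have hgmono : ∀ a b : Fin n, a < b → (g a : ℤ) < (g b : ℤ) :=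
      fun a b hab => fin_cast_lt (hg hab)
    have hlef : ∀ j, gz j ≤ (f j : ℤ) := by
      intro j
      have h1 := hle j
      have h1' : (g j : ℤ) ≤ (f j : ℤ) := fin_cast_le h1
      by_cases hj : j ∈ s0
      · have : (g j : ℤ) < (f j : ℤ) := fin_cast_lt ((hmem j).1 hj)
        simp only [hgz, if_pos hj]
        omega
      · simp only [hgz, if_neg hj]
        omega
    have h0 : ∀ j, 0 ≤ gz j := by
      intro j; simp only [hgz]; split_ifs <;> positivity
    have hkb : ∀ j, gz j ≤ (k : ℤ) := by
      intro j
      have := (f j).isLt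
      have := hlef j
      omega
    have hmono : StrictMono gz := by
      apply strictMono_of_adj
      intro j hj
      set a : Fin n := ⟨j, Nat.lt_of_succ_lt hj⟩
      set b : Fin n := ⟨j + 1, hj⟩
      have hab : a < b := by simp [a, b]
      have hgg := hgmono a b hab
      have hff := hfmono a b hab
      by_cases hja : a ∈ s0
      · by_cases hjb : b ∈ s0
        · simp only [hgz, if_pos hja, if_pos hjb]; omega
        · -- b ∉ s0 : g b = f b; and g a < f a so f a ≥ g a + 1; f a < f b = g b
          have h1 : g b ≤ f b := hle b
          have h2 : ¬ g b < f b := fun hc => hjb ((hmem b).2 hc)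
          have h3 : (g b : ℤ) = (f b : ℤ) := by
            have heq2 : g b = f b := le_antisymm h1 (not_lt.1 h2)
            rw [heq2]
          have h4 := hlef a
          simp only [hgz, if_pos hja, if_neg hjb] at *
          omega
      · simp only [hgz, if_neg hja]
        split_ifs <;> omega
    obtain ⟨g', hg', hval, hdet⟩ := WM_eval (toep k h * toep k (unitv k t) ^ m) f gz h0 hkb hmono
    apply Finset.sum_pos'
    · intro s _
      exact mul_nonneg (pow_nonneg ht.le _)
        (WM_det_nonneg _ (MatTNN_mul_unit_pow hh ht.le m) f g hf hg s)
    · refine ⟨s0, Finset.mem_univ _, ?_⟩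
      rw [hdet]
      refine mul_pos (pow_pos ht _) (ih f g' hf hg' ?_ ?_)
      · intro i
        have h1 := hval i
        have h2 := hlef i
        rw [Fin.le_def]
        omega
      · intro i
        have h1 := hval i
        have h2 := hbd i
        by_cases hi : i ∈ s0
        · have : gz i = (g i : ℤ) + 1 := by simp [hgz, if_pos hi]
          omega
        · have h3 : gz i = (g i : ℤ) := by simp [hgz, if_neg hi]
          have h4 : g i = f i := le_antisymm (hle i) (not_lt.1 fun hc => hi ((hmem i).2 hc))
          have : (g i : ℕ) = (f i : ℕ) := by exact_mod_cast congrArg Fin.val h4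
          omega

end ToepAux

namespace ToepAux

variable {k : ℕ}

/-- Convolution with the `h`-vector of `I + t E`. -/
def convUnit (t : ℝ) (h : Fin k → ℝ) : Fin k → ℝ :=
  fun a => h a + t * toepEntry k h ((a : ℕ) : ℤ)

lemma toepEntry_convUnit (t : ℝ) (h : Fin k → ℝ) {n : ℤ} (hn : n ≤ (k : ℤ)) :
    toepEntry k (convUnit t h) n = toepEntry k h n + t * toepEntry k h (n - 1) := by
  rcases lt_trichotomy n 0 with h1 | h1 | h1
  · rw [toepEntry_of_neg h1, toepEntry_of_neg h1, toepEntry_of_neg (by omega), mul_zero, add_zero]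
  · subst h1
    rw [toepEntry_zero, toepEntry_zero, toepEntry_of_neg (by omega), mul_zero, add_zero]
  · rw [toepEntry_of_pos h1 hn, toepEntry_of_pos h1 hn]
    unfold convUnit
    congr 2
    have : (((⟨(n - 1).toNat, by omega⟩ : Fin k) : ℕ) : ℤ) = n - 1 := by simp; omega
    rw [this]

open Matrix in
lemma toep_convUnit (t : ℝ) (h : Fin k → ℝ) :
    toep k (convUnit t h) = toep k h * toep k (unitv k t) := by
  ext i j
  rw [mul_unit_apply]
  show toepEntry k (convUnit t h) ((i : ℤ) - (j : ℤ))
    = toep k h i j + t * colZ k (toep k h) ((j : ℤ) + 1) i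
  have hik := i.isLt
  have hjk := j.isLt
  rw [toepEntry_convUnit t h (by omega)]
  have hcol : colZ k (toep k h) ((j : ℤ) + 1) i = toepEntry k h ((i : ℤ) - (j : ℤ) - 1) := by
    unfold colZ
    by_cases hj : (j : ℕ) < k
    · rw [dif_pos ⟨by omega, by omega⟩]
      show toepEntry k h ((i : ℤ) - ((((j : ℤ) + 1).toNat : ℕ) : ℤ)) = _
      congr 1
      omega
    · rw [dif_neg (by omega), Pi.zero_apply]
      exact (toepEntry_of_neg (by omega)).symm
  rw [hcol]
  rfl

/-- Iterated convolution: the `h`-vector of `toep k h * (I + tE)^m`. -/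
def iterC (k : ℕ) (h : Fin k → ℝ) (t : ℝ) : ℕ → (Fin k → ℝ)
  | 0 => h
  | m + 1 => convUnit t (iterC k h t m)

lemma toep_iterC (h : Fin k → ℝ) (t : ℝ) (m : ℕ) :
    toep k (iterC k h t m) = toep k h * toep k (unitv k t) ^ m := by
  induction m with
  | zero => simp [iterC]
  | succ m ih =>
    show toep k (convUnit t (iterC k h t m)) = _
    rw [toep_convUnit, ih, pow_succ, mul_assoc]

lemma iterC_zero (h : Fin k → ℝ) (m : ℕ) : iterC k h 0 m = h := by
  induction m with
  | zero => rfl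
  | succ m ih =>
    show convUnit 0 (iterC k h 0 m) = h
    rw [ih]
    funext a
    simp [convUnit]

lemma iterC_mem_TPos {h : Fin k → ℝ} (hh : h ∈ TNN k) {t : ℝ} (ht : 0 < t) :
    iterC k h t k ∈ TPos k := by
  have hh' : MatTNN k (toep k h) := fun n f g hf hg => hh n f g hf hg
  constructor
  · intro n f g hf hg
    rw [toep_iterC]
    exact MatTNN_mul_unit_pow hh' ht.le k n f g hf hg
  · intro n f g hf hg hle
    rw [toep_iterC]
    refine pos_mul_unit_pow hh' ht k f g hf hg hle fun i => ?_
    have := (f i).isLt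
    omega

lemma continuous_toepEntry (n : ℤ) : Continuous fun h : Fin k → ℝ => toepEntry k h n := by
  unfold toepEntry
  by_cases h1 : 0 < n ∧ n ≤ (k : ℤ)
  · simp only [dif_pos h1]
    exact continuous_apply _
  · simp only [dif_neg h1]
    exact continuous_const

lemma continuous_iterC (h : Fin k → ℝ) (m : ℕ) : Continuous fun t => iterC k h t m := by
  induction m with
  | zero => exact continuous_const
  | succ m ih =>
    show Continuous fun t => convUnit t (iterC k h t m)
    apply continuous_pi
    intro a
    simp only [convUnit]
    exact ((continuous_apply a).comp ih).add
      (continuous_id.mul ((continuous_toepEntry _).comp ih))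

lemma isClosed_TNN : IsClosed (TNN k) := by
  have heq : TNN k = ⋂ (n : ℕ), ⋂ (f : Fin n → Fin (k + 1)), ⋂ (g : Fin n → Fin (k + 1)),
      ⋂ (_ : StrictMono f), ⋂ (_ : StrictMono g),
        {h : Fin k → ℝ | 0 ≤ (((toep k h).submatrix f g).det)} := by
    ext h
    simp only [Set.mem_iInter, Set.mem_setOf_eq]
    exact ⟨fun hh n f g hf hg => hh n f g hf hg, fun hh n f g hf hg => hh n f g hf hg⟩
  rw [heq]
  refine isClosed_iInter fun n => isClosed_iInter fun f => isClosed_iInter fun g =>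
    isClosed_iInter fun _ => isClosed_iInter fun _ => ?_
  apply isClosed_le continuous_const
  apply Continuous.matrix_det
  apply Continuous.matrix_submatrix
  apply continuous_matrix
  intro i j
  exact continuous_toepEntry _

end ToepAux


open ToepAux

/-- every totally nonnegative unitriangular Toeplitz matrix is a
limit of totally positive ones: the closure of `T_{>0}` is `T_{≥0}`. -/
theorem closure_TPos_eq_TNN (k : ℕ) : closure (TPos k) = TNN k := by
  apply subset_antisymm
  · rw [← (isClosed_TNN (k := k)).closure_eq]
    exact closure_mono Set.inter_subset_left
  · intro h hh
    have htend : Filter.Tendsto (fun j : ℕ => iterC k h (1 / ((j : ℝ) + 1)) k)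
        Filter.atTop (nhds h) := by
      have h0 : iterC k h 0 k = h := iterC_zero h k
      have := ((continuous_iterC h k).tendsto 0).comp tendsto_one_div_add_atTop_nhds_zero_nat
      rwa [h0] at this
    exact mem_closure_of_tendsto htend (Filter.Eventually.of_forall fun j =>
      iterC_mem_TPos hh (by positivity))
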